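/- Let p be a prime. The sum over all isomorphism classes of finite abelian p-groups A of 1/|Aut(A)| converges. Concretely, parametrizing isomorphism classes by finitely supported functions f : ℕ → ℕ, where f(k) is the multiplicity of the cyclic factor ℤ/p^{k+1}ℤ and A_f = ⊕_{k ∈ ℕ} (ZMod (p^{k+1}))^{f(k)}, the function sending f to 1/|Aut(A_f)| (as a real number) is summable over all finitely supported f : ℕ → ℕ. -/

import Mathlib

set_option maxHeartbeats 1000000

open scoped DirectSum

/-- The finite abelian `p`-group `A_f = ⊕ₖ (ℤ/p^(k+1)ℤ)^(f k)` attached to a finitely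
supported function `f : ℕ → ℕ`; every finite abelian `p`-group is isomorphic to exactly
one such group. -/
def abelianPGroupOf (p : ℕ) (f : ℕ →₀ ℕ) : Type :=
  ⨁ (k : ℕ), (Fin (f k) → ZMod (p ^ (k + 1)))

instance (p : ℕ) (f : ℕ →₀ ℕ) : AddCommGroup (abelianPGroupOf p f) := by
  unfold abelianPGroupOf; infer_instance

section Aux

variable {R : Type*} [CommRing R] {n : ℕ}

/-- The additive automorphism of `Fin n → R` given by scaling each coordinate by a unit and
permuting coordinates. -/
def permUnitsAddAut (u : Fin n → Rˣ) (σ : Equiv.Perm (Fin n)) :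
    (Fin n → R) ≃+ (Fin n → R) where
  toFun v := fun i => (u i : R) * v (σ i)
  invFun w := fun j => ((u (σ.symm j))⁻¹ : Rˣ) * w (σ.symm j)
  left_inv v := by
    funext j
    simp [Units.inv_mul_cancel_left]
  right_inv w := by
    funext i
    simp [Units.mul_inv_cancel_left]
  map_add' v w := by
    funext i
    simp [mul_add]

theorem permUnitsAddAut_injective [Nontrivial R] :
    Function.Injective (fun d : (Fin n → Rˣ) × Equiv.Perm (Fin n) =>
      permUnitsAddAut d.1 d.2) := by
  rintro ⟨u, σ⟩ ⟨u', σ'⟩ h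
  have key : ∀ (j i : Fin n), (u i : R) * (Pi.single j (1 : R) : Fin n → R) (σ i)
      = (u' i : R) * (Pi.single j (1 : R) : Fin n → R) (σ' i) := by
    intro j i
    exact congrFun (congrArg (fun e : (Fin n → R) ≃+ (Fin n → R) => e (Pi.single j 1)) h) i
  have hσ : σ = σ' := Equiv.ext fun i => by
    by_contra hne
    have := key (σ i) i
    rw [Pi.single_eq_same, mul_one, Pi.single_eq_of_ne (Ne.symm hne), mul_zero] at this
    exact (u i).ne_zero this
  subst hσ
  have hu : u = u' := by
    funext i
    have := key (σ i) i
    simp only [Pi.single_eq_same, mul_one] at this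
    exact Units.ext this
  rw [hu]

end Aux

section CardBound

theorem card_aut_lower (p : ℕ) (hp : p.Prime) (f : ℕ →₀ ℕ) :
    (∏ k ∈ f.support, p ^ (k * f k) * (f k).factorial) ≤
      Nat.card (AddAut (abelianPGroupOf p f)) := by
  classical
  haveI hz : ∀ k : ℕ, NeZero (p ^ (k + 1)) := fun k => ⟨pow_ne_zero _ hp.pos.ne'⟩
  haveI hnt : ∀ k : ℕ, Fact (1 < p ^ (k + 1)) :=
    fun k => ⟨Nat.one_lt_pow (Nat.succ_ne_zero k) hp.one_lt⟩
  set β : ℕ → Type := fun k => (Fin (f k) → ZMod (p ^ (k + 1))) with hβ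
  set N : ℕ := f.support.sup id + 1 with hN
  have hsupp : ∀ k, N ≤ k → f k = 0 := by
    intro k hk
    by_contra h
    have h1 : k ∈ f.support := Finsupp.mem_support_iff.mpr h
    have h2 := Finset.le_sup (f := id) h1
    simp only [id] at h2
    omega
  have hss : f.support ⊆ Finset.range N := by
    intro k hk
    simp only [Finset.mem_range]
    by_contra h
    exact (Finsupp.mem_support_iff.mp hk) (hsupp k (by omega))
  -- the ambient group is finite
  haveI hfinG : Finite (⨁ k, β k) := by
    refine Finite.of_injective
        (fun (x : ⨁ k, β k) (k : Fin N) => x (k : ℕ))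
        (fun x y hxy => DFinsupp.ext fun k => ?_)
    rcases lt_or_ge k N with hk | hk
    · exact congrFun hxy ⟨k, hk⟩
    · haveI : IsEmpty (Fin (f k)) :=
        ⟨fun i => by have h1 := i.2; have h0 := hsupp k hk; omega⟩
      exact Subsingleton.elim _ _
  haveI hfinG' : Finite (abelianPGroupOf p f) := hfinG
  haveI hfinAut : Finite (AddAut (abelianPGroupOf p f)) :=
    Finite.of_injective (fun (a : AddAut (abelianPGroupOf p f)) =>
      (a : abelianPGroupOf p f → abelianPGroupOf p f)) DFunLike.coe_injective
  haveI hfinAut' : Finite ((Π₀ (i : ℕ), Fin (f i) → ZMod (p ^ (i + 1)))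
      ≃+ Π₀ (i : ℕ), Fin (f i) → ZMod (p ^ (i + 1))) := hfinAut
  -- the injection from the product of component data
  set D : Type := ∀ k : Fin N, (Fin (f (k : ℕ)) → (ZMod (p ^ ((k : ℕ) + 1)))ˣ)
      × Equiv.Perm (Fin (f (k : ℕ))) with hD
  set e : D → ∀ k : ℕ, β k ≃+ β k := fun d k =>
    if h : k < N then permUnitsAddAut (d ⟨k, h⟩).1 (d ⟨k, h⟩).2 else AddEquiv.refl _ with he
  have hg : Function.Injective (fun d : D =>
      (DFinsupp.mapRange.addEquiv (e d) : AddAut (abelianPGroupOf p f))) := by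
    intro d d' hdd'
    have happ : ∀ (k : ℕ) (x : β k), e d k x = e d' k x := by
      intro k x
      have h1 : DFinsupp.mapRange.addEquiv (e d) (DFinsupp.single k x)
          = DFinsupp.mapRange.addEquiv (e d') (DFinsupp.single k x) := by
        exact congrFun (congrArg (fun (a : AddAut (abelianPGroupOf p f)) =>
          (a : abelianPGroupOf p f → abelianPGroupOf p f)) hdd') (DFinsupp.single k x)
      rw [DFinsupp.mapRange.addEquiv_apply, DFinsupp.mapRange.addEquiv_apply,
        DFinsupp.mapRange_single, DFinsupp.mapRange_single] at h1
      have h2 := congrArg (fun (z : Π₀ k, β k) => z k) h1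
      simpa only [DFinsupp.single_eq_same] using h2
    funext k
    have hk : (k : ℕ) < N := k.2
    have heq : permUnitsAddAut (d k).1 (d k).2 = permUnitsAddAut (d' k).1 (d' k).2 := by
      have h2 : e d (k : ℕ) = e d' (k : ℕ) := AddEquiv.ext (happ (k : ℕ))
      simpa only [he, dif_pos hk] using h2
    exact permUnitsAddAut_injective heq
  have hcard := Nat.card_le_card_of_injective _ hg
  have hUk : ∀ k : ℕ, Nat.card ((ZMod (p ^ (k + 1)))ˣ) = p ^ k * (p - 1) := by
    intro k
    rw [Nat.card_eq_fintype_card, ZMod.card_units_eq_totient,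
      Nat.totient_prime_pow hp (Nat.succ_pos k)]
    simp
  calc ∏ k ∈ f.support, p ^ (k * f k) * (f k).factorial
      = ∏ k ∈ Finset.range N, p ^ (k * f k) * (f k).factorial := by
        refine Finset.prod_subset hss ?_
        intro k _ hk
        simp [Finsupp.notMem_support_iff.mp hk]
    _ = ∏ k : Fin N, p ^ ((k : ℕ) * f (k : ℕ)) * (f (k : ℕ)).factorial :=
        (Fin.prod_univ_eq_prod_range _ N).symm
    _ ≤ ∏ k : Fin N, Nat.card ((Fin (f (k : ℕ)) → (ZMod (p ^ ((k : ℕ) + 1)))ˣ)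
          × Equiv.Perm (Fin (f (k : ℕ)))) := by
        refine Finset.prod_le_prod' ?_
        intro k _
        rw [Nat.card_prod, Nat.card_fun, Nat.card_eq_fintype_card (α := Equiv.Perm _),
          Fintype.card_perm, Fintype.card_fin, Nat.card_eq_fintype_card (α := Fin _),
          Fintype.card_fin, hUk]
        refine Nat.mul_le_mul_right _ ?_
        rw [pow_mul]
        refine Nat.pow_le_pow_left ?_ _
        have h1 : 1 ≤ p - 1 := by have := hp.two_le; omega
        calc p ^ (k : ℕ) = p ^ (k : ℕ) * 1 := (mul_one _).symm
          _ ≤ p ^ (k : ℕ) * (p - 1) := Nat.mul_le_mul_left _ h1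
    _ = Nat.card D := Nat.card_pi.symm
    _ ≤ Nat.card (AddAut (abelianPGroupOf p f)) := hcard

end CardBound

/-- for a prime `p`, the sum of `1/|Aut(A)|` over all isomorphism classes of
finite abelian `p`-groups `A` converges: parametrizing the isomorphism classes by finitely
supported functions `f : ℕ → ℕ` via `A_f = ⊕ₖ (ℤ/p^(k+1)ℤ)^(f k)`, the function
`f ↦ 1/|Aut(A_f)|` is summable. -/
theorem summable_one_div_card_aut_abelian_pGroup (p : ℕ) (hp : p.Prime) :
    Summable (fun f : ℕ →₀ ℕ => (1 : ℝ) / Nat.card (AddAut (abelianPGroupOf p f))) := by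
  classical
  have hp2 : (2 : ℝ) ≤ p := by exact_mod_cast hp.two_le
  have hppos : (0 : ℝ) < p := by linarith
  set h : ℕ → ℕ → ℝ := fun k n => (((p : ℝ)) ^ (k * n) * n.factorial)⁻¹ with hh
  have hhpos : ∀ k n, 0 < h k n := fun k n => by
    rw [hh]
    positivity
  have hform : ∀ k n : ℕ, h k n = (((p : ℝ)⁻¹) ^ k) ^ n / n.factorial := by
    intro k n
    show ((p : ℝ) ^ (k * n) * n.factorial)⁻¹ = _
    rw [mul_inv, ← inv_pow, pow_mul, div_eq_mul_inv]
  set g : (ℕ →₀ ℕ) → ℝ :=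
    fun f => ∏ k ∈ f.support, ((p : ℝ) ^ (k * f k) * (f k).factorial)⁻¹ with hg
  have hgpos : ∀ f, 0 < g f := fun f => Finset.prod_pos fun k _ => hhpos k (f k)
  have hsum : Summable g := by
    refine summable_of_sum_le (c := Real.exp 2) (fun f => (hgpos f).le) ?_
    intro u
    set N : ℕ := u.sup (fun f => f.support.sup id) + 1 with hN
    set M : ℕ := u.sup (fun f => f.support.sup f) + 1 with hM
    have hNf : ∀ f ∈ u, f.support ⊆ Finset.range N := by
      intro f hf k hk
      have h1 : f.support.sup id ≤ u.sup (fun f => f.support.sup id) :=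
        Finset.le_sup (f := fun f : ℕ →₀ ℕ => f.support.sup id) hf
      have h2 : id k ≤ f.support.sup id := Finset.le_sup hk
      simp only [id] at h2
      simp only [Finset.mem_range]
      omega
    have hMf : ∀ f ∈ u, ∀ k, f k < M := by
      intro f hf k
      by_cases hk : k ∈ f.support
      · have h1 : f.support.sup f ≤ u.sup (fun f => f.support.sup f) :=
          Finset.le_sup (f := fun f : ℕ →₀ ℕ => f.support.sup f) hf
        have h2 : f k ≤ f.support.sup f := Finset.le_sup hk
        omega
      · rw [Finsupp.notMem_support_iff.mp hk]
        omega
    have hgN : ∀ f ∈ u, g f = ∏ k : Fin N, h (k : ℕ) (f (k : ℕ)) := by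
      intro f hf
      rw [hg, Fin.prod_univ_eq_prod_range (fun k => h k (f k)) N]
      refine Finset.prod_subset (hNf f hf) ?_
      intro k _ hk
      rw [Finsupp.notMem_support_iff.mp hk]
      show ((p : ℝ) ^ (k * 0) * (Nat.factorial 0))⁻¹ = 1
      norm_num
    set ι : (ℕ →₀ ℕ) → (Fin N → ℕ) := fun f k => f (k : ℕ) with hι
    have hinj : ∀ x ∈ u, ∀ y ∈ u, ι x = ι y → x = y := by
      intro x hx y hy hxy
      ext k
      rcases lt_or_ge k N with hk | hk
      · exact congrFun hxy ⟨k, hk⟩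
      · have h1 : k ∉ x.support := fun hc => by
          have := Finset.mem_range.mp (hNf x hx hc); omega
        have h2 : k ∉ y.support := fun hc => by
          have := Finset.mem_range.mp (hNf y hy hc); omega
        rw [Finsupp.notMem_support_iff.mp h1, Finsupp.notMem_support_iff.mp h2]
    calc ∑ f ∈ u, g f
        = ∑ f ∈ u, ∏ k : Fin N, h (k : ℕ) (ι f k) := Finset.sum_congr rfl hgN
      _ = ∑ v ∈ u.image ι, ∏ k : Fin N, h (k : ℕ) (v k) :=
          (Finset.sum_image (f := fun v : Fin N → ℕ => ∏ k : Fin N, h (k : ℕ) (v k))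
            hinj).symm
      _ ≤ ∑ v ∈ Fintype.piFinset (fun _ : Fin N => Finset.range M),
            ∏ k : Fin N, h (k : ℕ) (v k) := by
          refine Finset.sum_le_sum_of_subset_of_nonneg ?_ ?_
          · intro v hv
            rcases Finset.mem_image.mp hv with ⟨f, hf, rfl⟩
            rw [Fintype.mem_piFinset]
            intro k
            exact Finset.mem_range.mpr (hMf f hf (k : ℕ))
          · intro v _ _
            exact Finset.prod_nonneg fun k _ => (hhpos _ _).le
      _ = ∏ k : Fin N, ∑ n ∈ Finset.range M, h (k : ℕ) n :=
          (Finset.prod_univ_sum _ _).symm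
      _ ≤ ∏ k : Fin N, Real.exp (((p : ℝ)⁻¹) ^ (k : ℕ)) := by
          refine Finset.prod_le_prod ?_ ?_
          · intro k _
            exact Finset.sum_nonneg fun n _ => (hhpos _ _).le
          · intro k _
            have hx : (0 : ℝ) ≤ ((p : ℝ)⁻¹) ^ (k : ℕ) := by positivity
            calc ∑ n ∈ Finset.range M, h (k : ℕ) n
                = ∑ n ∈ Finset.range M, (((p : ℝ)⁻¹) ^ (k : ℕ)) ^ n / n.factorial :=
                  Finset.sum_congr rfl fun n _ => hform _ n
              _ ≤ Real.exp (((p : ℝ)⁻¹) ^ (k : ℕ)) := Real.sum_le_exp_of_nonneg hx M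
      _ = Real.exp (∑ k : Fin N, ((p : ℝ)⁻¹) ^ (k : ℕ)) := (Real.exp_sum _ _).symm
      _ ≤ Real.exp 2 := by
          rw [Real.exp_le_exp]
          calc ∑ k : Fin N, ((p : ℝ)⁻¹) ^ (k : ℕ)
              = ∑ k ∈ Finset.range N, ((p : ℝ)⁻¹) ^ k :=
                Fin.sum_univ_eq_sum_range (fun k => ((p : ℝ)⁻¹) ^ k) N
            _ ≤ ∑ k ∈ Finset.range N, (1 / 2 : ℝ) ^ k := by
                refine Finset.sum_le_sum fun k _ => ?_
                refine pow_le_pow_left₀ (by positivity) ?_ k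
                rw [one_div]
                exact inv_anti₀ (by norm_num) hp2
            _ ≤ 2 := sum_geometric_two_le N
  refine Summable.of_nonneg_of_le (fun f => by positivity) (fun f => ?_) hsum
  have hle := card_aut_lower p hp f
  have hNfpos : 0 < ∏ k ∈ f.support, p ^ (k * f k) * (f k).factorial :=
    Finset.prod_pos fun k _ =>
      Nat.mul_pos (Nat.pow_pos hp.pos) (Nat.factorial_pos _)
  have h1 : (1 : ℝ) / Nat.card (AddAut (abelianPGroupOf p f)) ≤
      1 / ((∏ k ∈ f.support, p ^ (k * f k) * (f k).factorial : ℕ) : ℝ) := by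
    refine one_div_le_one_div_of_le (by exact_mod_cast hNfpos) (by exact_mod_cast hle)
  refine h1.trans_eq ?_
  show _ = ∏ k ∈ f.support, ((p : ℝ) ^ (k * f k) * ((f k).factorial : ℝ))⁻¹
  rw [one_div]
  push_cast
  rw [Finset.prod_inv_distrib]
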